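/- arXiv:cond-mat/0609584 — 4 statements merged into one kernel-verified Lean document; each statement's English description precedes it below -/
import Mathlib

section
/- An LFSR sequence of order n over F_m (m prime) with nonzero initial state has period m^n − 1 if and only if its characteristic polynomial f(x) = x^n − a_1 x^{n-1} − ... − a_n is primitive over F_m (i.e., f is irreducible and a root of f generates the multiplicative group of F_{m^n}). -/
open Polynomial

/-- The characteristic polynomial `x^n - a₁ x^(n-1) - ... - aₙ` of the LFSR
recurrence `r i = a₁ r (i-1) + ... + aₙ r (i-n)` over `F_m`. -/
noncomputable def lfsrCharPoly (m n : ℕ) (a : Fin n → ZMod m) : Polynomial (ZMod m) :=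
  Polynomial.X ^ n - ∑ k : Fin n, Polynomial.C (a k) * Polynomial.X ^ (n - (k.1 + 1))

/-- `f` is primitive over `F_m`: it is irreducible and its root generates the
multiplicative group of `F_{m^n}` (i.e. the root has multiplicative order `m^n - 1`). -/
def IsPrimitivePoly (m n : ℕ) (a : Fin n → ZMod m) : Prop :=
  Irreducible (lfsrCharPoly m n a) ∧
    orderOf (AdjoinRoot.root (lfsrCharPoly m n a)) = m ^ n - 1

namespace LfsrAux
variable {m n : ℕ} [Fact (Nat.Prime m)]
lemma lfsr_monic (hn : 0 < n) (a : Fin n → ZMod m) : (lfsrCharPoly m n a).Monic := by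
  apply Polynomial.monic_X_pow_sub
  apply lt_of_le_of_lt (Polynomial.degree_sum_le _ _)
  rw [Finset.sup_lt_iff (by exact_mod_cast WithBot.bot_lt_coe n)]
  intro k _
  refine lt_of_le_of_lt (Polynomial.degree_C_mul_X_pow_le _ _) ?_
  exact_mod_cast Nat.sub_lt hn (Nat.succ_pos _)

lemma lfsr_natDegree (hn : 0 < n) (a : Fin n → ZMod m) :
    (lfsrCharPoly m n a).natDegree = n := by
  have hd : (lfsrCharPoly m n a).degree = n := by
    unfold lfsrCharPoly
    rw [Polynomial.degree_sub_eq_left_of_degree_lt, Polynomial.degree_X_pow]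
    rw [Polynomial.degree_X_pow]
    apply lt_of_le_of_lt (Polynomial.degree_sum_le _ _)
    rw [Finset.sup_lt_iff (by exact_mod_cast WithBot.bot_lt_coe n)]
    intro k _
    refine lt_of_le_of_lt (Polynomial.degree_C_mul_X_pow_le _ _) ?_
    exact_mod_cast Nat.sub_lt hn (Nat.succ_pos _)
  exact Polynomial.natDegree_eq_of_degree_eq_some hd

noncomputable def lfsrBasis (hn : 0 < n) (a : Fin n → ZMod m) :
    Module.Basis (Fin n) (ZMod m) (AdjoinRoot (lfsrCharPoly m n a)) :=
  (AdjoinRoot.powerBasis' (lfsr_monic hn a)).basis.reindex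
    (finCongr (by simp [lfsr_natDegree hn a]))

lemma lfsrBasis_eq_pow (hn : 0 < n) (a : Fin n → ZMod m) (k : Fin n) :
    lfsrBasis hn a k = (AdjoinRoot.root (lfsrCharPoly m n a)) ^ (k : ℕ) := by
  simp only [lfsrBasis, Module.Basis.reindex_apply]
  rw [PowerBasis.basis_eq_pow]
  simp

lemma root_pow_n (hn : 0 < n) (a : Fin n → ZMod m) :
    (AdjoinRoot.root (lfsrCharPoly m n a)) ^ n =
      ∑ k : Fin n, a k • (AdjoinRoot.root (lfsrCharPoly m n a)) ^ (n - (k.1 + 1)) := by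
  have h : (Polynomial.aeval (AdjoinRoot.root (lfsrCharPoly m n a))) (lfsrCharPoly m n a) = 0 := by
    rw [AdjoinRoot.aeval_eq, AdjoinRoot.mk_self]
  unfold lfsrCharPoly at h ⊢
  simp only [map_sub, map_pow, map_sum, map_mul, Polynomial.aeval_X, Polynomial.aeval_C,
    sub_eq_zero] at h
  rw [h]
  exact Finset.sum_congr rfl fun k _ => by rw [Algebra.smul_def]


noncomputable def lfsrL (hn : 0 < n) (a : Fin n → ZMod m) (r : ℕ → ZMod m) :
    Module.Dual (ZMod m) (AdjoinRoot (lfsrCharPoly m n a)) :=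
  (lfsrBasis hn a).constr (ZMod m) (fun k => r k)

lemma lfsrL_pow (hn : 0 < n) (a : Fin n → ZMod m) (r : ℕ → ZMod m)
    (hrec : ∀ i, r (i + n) = ∑ k : Fin n, a k * r (i + n - (k.1 + 1))) (i : ℕ) :
    lfsrL hn a r ((AdjoinRoot.root (lfsrCharPoly m n a)) ^ i) = r i := by
  induction i using Nat.strong_induction_on with
  | _ i ih =>
    rcases lt_or_ge i n with hi | hi
    · have : ((AdjoinRoot.root (lfsrCharPoly m n a)) ^ i) = lfsrBasis hn a ⟨i, hi⟩ := by
        rw [lfsrBasis_eq_pow]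
      rw [this, lfsrL, Module.Basis.constr_basis]
    · obtain ⟨j, rfl⟩ : ∃ j, i = j + n := ⟨i - n, by omega⟩
      rw [pow_add, root_pow_n hn a, Finset.mul_sum, map_sum, hrec j]
      refine Finset.sum_congr rfl fun k _ => ?_
      have he : j + n - (k.1 + 1) = j + (n - (k.1 + 1)) := by omega
      rw [mul_smul_comm, map_smul, ← pow_add, he, smul_eq_mul]
      have hlt : j + (n - (k.1 + 1)) < j + n := by omega
      rw [ih _ hlt]

/-- The annihilator ideal of the sequence. -/
noncomputable def lfsrJ (hn : 0 < n) (a : Fin n → ZMod m) (r : ℕ → ZMod m) :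
    Ideal (AdjoinRoot (lfsrCharPoly m n a)) where
  carrier := {u | ∀ i, lfsrL hn a r ((AdjoinRoot.root (lfsrCharPoly m n a)) ^ i * u) = 0}
  add_mem' := by
    intro u v hu hv i
    rw [mul_add, map_add, hu i, hv i, add_zero]
  zero_mem' := by intro i; rw [mul_zero, map_zero]
  smul_mem' := by
    intro c u hu i
    have key : (lfsrL hn a r).comp
        (LinearMap.mulLeft (ZMod m) ((AdjoinRoot.root (lfsrCharPoly m n a)) ^ i * u)) = 0 := by
      apply (lfsrBasis hn a).ext
      intro k
      simp only [LinearMap.comp_apply, LinearMap.mulLeft_apply, LinearMap.zero_apply,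
        lfsrBasis_eq_pow]
      calc lfsrL hn a r ((AdjoinRoot.root (lfsrCharPoly m n a)) ^ i * u *
            (AdjoinRoot.root (lfsrCharPoly m n a)) ^ (k : ℕ))
          = lfsrL hn a r ((AdjoinRoot.root (lfsrCharPoly m n a)) ^ (i + (k : ℕ)) * u) := by
            ring_nf
        _ = 0 := hu _
    have := LinearMap.congr_fun key c
    simp only [LinearMap.comp_apply, LinearMap.mulLeft_apply, LinearMap.zero_apply] at this
    calc lfsrL hn a r ((AdjoinRoot.root (lfsrCharPoly m n a)) ^ i * (c • u)) =
        lfsrL hn a r ((AdjoinRoot.root (lfsrCharPoly m n a)) ^ i * u * c) := by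
          rw [smul_eq_mul]; ring_nf
      _ = 0 := this

lemma period_iff (hn : 0 < n) (a : Fin n → ZMod m) (r : ℕ → ZMod m)
    (hrec : ∀ i, r (i + n) = ∑ k : Fin n, a k * r (i + n - (k.1 + 1))) (T : ℕ) :
    (∀ i, r (i + T) = r i) ↔
      (AdjoinRoot.root (lfsrCharPoly m n a)) ^ T - 1 ∈ lfsrJ hn a r := by
  have key : ∀ i, lfsrL hn a r ((AdjoinRoot.root (lfsrCharPoly m n a)) ^ i *
      ((AdjoinRoot.root (lfsrCharPoly m n a)) ^ T - 1)) = r (i + T) - r i := by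
    intro i
    rw [mul_sub, mul_one, ← pow_add, map_sub, lfsrL_pow hn a r hrec, lfsrL_pow hn a r hrec]
  constructor
  · intro h i
    rw [key i, h i, sub_self]
  · intro h i
    have := h i
    rw [key i] at this
    exact sub_eq_zero.mp this

lemma one_not_mem (hn : 0 < n) (a : Fin n → ZMod m) (r : ℕ → ZMod m)
    (hrec : ∀ i, r (i + n) = ∑ k : Fin n, a k * r (i + n - (k.1 + 1)))
    (hnz : ∃ j, j < n ∧ r j ≠ 0) : (1 : AdjoinRoot (lfsrCharPoly m n a)) ∉ lfsrJ hn a r := by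
  obtain ⟨j, _, hj⟩ := hnz
  intro h
  have := h j
  rw [mul_one, lfsrL_pow hn a r hrec] at this
  exact hj this

end LfsrAux

open LfsrAux

/-- An LFSR sequence of order `n` over `F_m` with nonzero initial state has
(least) period `m^n - 1` if and only if its characteristic polynomial is primitive. -/
theorem lfsr_maximal_period_iff_primitive (m n : ℕ) [Fact (Nat.Prime m)] (hn : 0 < n)
    (a : Fin n → ZMod m) (r : ℕ → ZMod m)
    (hrec : ∀ i, r (i + n) = ∑ k : Fin n, a k * r (i + n - (k.1 + 1)))
    (hnz : ∃ j, j < n ∧ r j ≠ 0) :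
    IsLeast {T | 0 < T ∧ ∀ i, r (i + T) = r i} (m ^ n - 1) ↔ IsPrimitivePoly m n a := by
  classical
  have hm2 : 2 ≤ m := (Fact.out : m.Prime).two_le
  haveI : NeZero m := ⟨by omega⟩
  have hq2 : 2 ≤ m ^ n := le_trans hm2 (Nat.le_self_pow hn.ne' m)
  have hJne : lfsrJ hn a r ≠ ⊤ := fun h =>
    one_not_mem hn a r hrec hnz (by rw [h]; exact Submodule.mem_top)
  haveI : Finite (AdjoinRoot (lfsrCharPoly m n a)) :=
    Finite.of_equiv _ (lfsrBasis hn a).equivFun.toEquiv.symm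
  have hcardA : Nat.card (AdjoinRoot (lfsrCharPoly m n a)) = m ^ n := by
    rw [Nat.card_congr (lfsrBasis hn a).equivFun.toEquiv, Nat.card_fun]
    simp [Nat.card_eq_fintype_card, ZMod.card]
  constructor
  · -- forward direction
    rintro ⟨⟨hT0, hTper⟩, hlb⟩
    haveI : Nontrivial (AdjoinRoot (lfsrCharPoly m n a) ⧸ lfsrJ hn a r) :=
      Ideal.Quotient.nontrivial_iff.mpr hJne
    haveI : Finite (AdjoinRoot (lfsrCharPoly m n a) ⧸ lfsrJ hn a r) :=
      Finite.of_surjective _ Ideal.Quotient.mk_surjective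
    set y : AdjoinRoot (lfsrCharPoly m n a) ⧸ lfsrJ hn a r :=
      Ideal.Quotient.mk (lfsrJ hn a r) (AdjoinRoot.root (lfsrCharPoly m n a)) with hy
    -- membership in J translates to y-power equations
    have hmem : ∀ T : ℕ,
        (AdjoinRoot.root (lfsrCharPoly m n a)) ^ T - 1 ∈ lfsrJ hn a r ↔ y ^ T = 1 := by
      intro T
      rw [← Ideal.Quotient.eq_zero_iff_mem, map_sub, map_pow, map_one, sub_eq_zero, hy]
    have hy1 : y ^ (m ^ n - 1) = 1 := (hmem _).mp ((period_iff hn a r hrec _).mp hTper)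
    -- the unit given by y
    have hyu : IsUnit y := IsUnit.of_pow_eq_one hy1 (by omega)
    obtain ⟨u, hu⟩ := hyu
    have hupow : u ^ (m ^ n - 1) = 1 := Units.ext (by rw [Units.val_pow_eq_pow_val, hu, hy1]; rfl)
    have hudvd : orderOf u ∣ m ^ n - 1 := orderOf_dvd_of_pow_eq_one hupow
    have huord_pos : 0 < orderOf u := orderOf_pos u
    have huper : (m ^ n - 1) ≤ orderOf u := by
      refine hlb ⟨huord_pos, ?_⟩
      rw [period_iff hn a r hrec, hmem, ← hu, ← Units.val_pow_eq_pow_val, pow_orderOf_eq_one]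
      rfl
    have huord : orderOf u = m ^ n - 1 :=
      le_antisymm (Nat.le_of_dvd (by omega) hudvd) huper
    -- counting
    have hc1 : m ^ n - 1 ≤ Nat.card (AdjoinRoot (lfsrCharPoly m n a) ⧸ lfsrJ hn a r)ˣ := by
      rw [← huord, ← Nat.card_zpowers]
      exact Subgroup.card_le_card_group _
    have hc2 : Nat.card (AdjoinRoot (lfsrCharPoly m n a) ⧸ lfsrJ hn a r)ˣ <
        Nat.card (AdjoinRoot (lfsrCharPoly m n a) ⧸ lfsrJ hn a r) := by
      letI := Fintype.ofFinite (AdjoinRoot (lfsrCharPoly m n a) ⧸ lfsrJ hn a r)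
      rw [Nat.card_eq_fintype_card, Nat.card_eq_fintype_card]
      exact card_units_lt _
    have hc3 : Nat.card (AdjoinRoot (lfsrCharPoly m n a) ⧸ lfsrJ hn a r) ≤ m ^ n := by
      rw [← hcardA]
      exact Nat.card_le_card_of_surjective _ Ideal.Quotient.mk_surjective
    have hcardB : Nat.card (AdjoinRoot (lfsrCharPoly m n a) ⧸ lfsrJ hn a r) = m ^ n := by omega
    have hcardU : Nat.card (AdjoinRoot (lfsrCharPoly m n a) ⧸ lfsrJ hn a r)ˣ = m ^ n - 1 := by
      omega
    -- mk is bijective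
    have hmkbij : Function.Bijective (Ideal.Quotient.mk (lfsrJ hn a r)) :=
      Function.Surjective.bijective_of_nat_card_le Ideal.Quotient.mk_surjective
        (by rw [hcardA, hcardB])
    -- every nonzero element of the quotient is a unit
    have hunit : ∀ b : (AdjoinRoot (lfsrCharPoly m n a) ⧸ lfsrJ hn a r), b ≠ 0 → IsUnit b := by
      intro b hb
      set g : Option (AdjoinRoot (lfsrCharPoly m n a) ⧸ lfsrJ hn a r)ˣ →
          (AdjoinRoot (lfsrCharPoly m n a) ⧸ lfsrJ hn a r) :=
        fun o => o.elim 0 Units.val with hg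
      have hginj : Function.Injective g := by
        rintro (_ | v) (_ | w) h
        · rfl
        · simp only [hg, Option.elim] at h
          have hw := w.isUnit; rw [← h] at hw
          exact (not_isUnit_zero hw).elim
        · simp only [hg, Option.elim] at h
          have hv := v.isUnit; rw [h] at hv
          exact (not_isUnit_zero hv).elim
        · simp only [hg, Option.elim] at h
          exact congrArg some (Units.ext h)
      have hcardO : Nat.card (Option (AdjoinRoot (lfsrCharPoly m n a) ⧸ lfsrJ hn a r)ˣ) =
          m ^ n := by
        letI := Fintype.ofFinite (AdjoinRoot (lfsrCharPoly m n a) ⧸ lfsrJ hn a r)ˣ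
        rw [Nat.card_eq_fintype_card, Fintype.card_option, ← Nat.card_eq_fintype_card, hcardU]
        omega
      have hgbij : Function.Bijective g :=
        Function.Injective.bijective_of_nat_card_le hginj (by rw [hcardO, hcardB])
      obtain ⟨o, ho⟩ := hgbij.2 b
      cases o with
      | none => exact absurd ho.symm hb
      | some v => exact ho ▸ v.isUnit
    -- A is a field
    have hfield : IsField (AdjoinRoot (lfsrCharPoly m n a)) := by
      refine ⟨?_, mul_comm, ?_⟩
      · obtain ⟨b1, b2, hb⟩ := exists_pair_ne (AdjoinRoot (lfsrCharPoly m n a) ⧸ lfsrJ hn a r)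
        obtain ⟨a1, rfl⟩ := hmkbij.2 b1
        obtain ⟨a2, rfl⟩ := hmkbij.2 b2
        exact ⟨a1, a2, fun h => hb (by rw [h])⟩
      · intro c hc
        have hmkc : Ideal.Quotient.mk (lfsrJ hn a r) c ≠ 0 := by
          intro h
          exact hc (hmkbij.1 (by rw [h, map_zero]))
        obtain ⟨v, hv⟩ := hunit _ hmkc
        obtain ⟨d, hd⟩ := hmkbij.2 ↑v⁻¹
        refine ⟨d, hmkbij.1 ?_⟩
        rw [map_mul, map_one, ← hv, hd, Units.mul_inv]
    -- conclude
    have hmax : (Ideal.span {lfsrCharPoly m n a} : Ideal (Polynomial (ZMod m))).IsMaximal :=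
      Ideal.Quotient.maximal_of_isField _ hfield
    have hprime : Prime (lfsrCharPoly m n a) :=
      (Ideal.span_singleton_prime (lfsr_monic hn a).ne_zero).mp hmax.isPrime
    refine ⟨hprime.irreducible, ?_⟩
    have : orderOf y = orderOf (AdjoinRoot.root (lfsrCharPoly m n a)) :=
      orderOf_injective (Ideal.Quotient.mk (lfsrJ hn a r)).toMonoidHom hmkbij.1 _
    rw [← this, ← hu, orderOf_units, huord]
  · rintro ⟨hirr, hord⟩
    haveI := Fact.mk hirr
    letI : Field (AdjoinRoot (lfsrCharPoly m n a)) := AdjoinRoot.instField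
    have hJbot : lfsrJ hn a r = ⊥ := (Ideal.eq_bot_or_top _).resolve_right hJne
    have hper : ∀ T : ℕ, (∀ i, r (i + T) = r i) ↔
        (AdjoinRoot.root (lfsrCharPoly m n a)) ^ T = 1 := by
      intro T
      rw [period_iff hn a r hrec T, hJbot, Ideal.mem_bot, sub_eq_zero]
    constructor
    · refine ⟨by omega, ?_⟩
      rw [hper, ← hord]
      exact pow_orderOf_eq_one _
    · rintro T ⟨hT0, hTper⟩
      have : m ^ n - 1 ∣ T := hord ▸ orderOf_dvd_of_pow_eq_one ((hper T).mp hTper)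
      exact Nat.le_of_dvd hT0 this
end

section
/- Let (r) be an LFSR sequence over F_m with primitive characteristic polynomial of degree n and period T = m^n − 1, and let α be a primitive complex m-th root of unity. Then the autocorrelation C(h) = Σ_{i=1}^{T} α^{r_i} · conj(α)^{r_{i+h}} equals T if h ≡ 0 (mod T) and equals −1 if h ≢ 0 (mod T). -/
set_option maxHeartbeats 1000000


open Polynomial

lemma charPoly_deg_lt (m n : ℕ) [Fact (Nat.Prime m)] (hn : 0 < n) (a : Fin n → ZMod m) :
    (∑ k : Fin n, Polynomial.C (a k) * Polynomial.X ^ (n - (k.1 + 1)) :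
      Polynomial (ZMod m)).degree < (Polynomial.X ^ n : Polynomial (ZMod m)).degree := by
  rw [degree_X_pow]
  refine lt_of_le_of_lt (Polynomial.degree_sum_le _ _) ?_
  rw [Finset.sup_lt_iff (by exact_mod_cast WithBot.bot_lt_coe n)]
  intro k _
  refine lt_of_le_of_lt (Polynomial.degree_C_mul_X_pow_le _ _) ?_
  exact_mod_cast Nat.sub_lt hn (Nat.succ_pos _)

lemma charPoly_monic (m n : ℕ) [Fact (Nat.Prime m)] (hn : 0 < n) (a : Fin n → ZMod m) :
    (lfsrCharPoly m n a).Monic :=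
  (monic_X_pow n).sub_of_left (charPoly_deg_lt m n hn a)

lemma charPoly_natDegree (m n : ℕ) [Fact (Nat.Prime m)] (hn : 0 < n) (a : Fin n → ZMod m) :
    (lfsrCharPoly m n a).natDegree = n := by
  have := degree_sub_eq_left_of_degree_lt (charPoly_deg_lt m n hn a)
  rw [degree_X_pow] at this
  exact natDegree_eq_of_degree_eq_some this

/-- Autocorrelations of a maximal period LFSR sequence:
`C(h) = ∑_{i=1}^{T} α^{r_i} conj(α)^{r_{i+h}}` equals `T` if `T ∣ h` and `-1` otherwise,
where `α` is a primitive complex `m`-th root of unity and `T = m^n - 1`. -/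
theorem lfsr_autocorrelation (m n : ℕ) [Fact (Nat.Prime m)] (hn : 0 < n)
    (a : Fin n → ZMod m) (r : ℕ → ZMod m)
    (hrec : ∀ i, r (i + n) = ∑ k : Fin n, a k * r (i + n - (k.1 + 1)))
    (hprim : IsPrimitivePoly m n a)
    (hper : ∀ i, r (i + (m ^ n - 1)) = r i)
    (hnz : ∃ j, j < n ∧ r j ≠ 0)
    (α : ℂ) (hα : IsPrimitiveRoot α m) (h : ℕ) :
    (h % (m ^ n - 1) = 0 →
      ∑ i ∈ Finset.range (m ^ n - 1),
        α ^ (r i).val * (starRingEnd ℂ α) ^ (r (i + h)).val = ((m ^ n - 1 : ℕ) : ℂ)) ∧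
    (h % (m ^ n - 1) ≠ 0 →
      ∑ i ∈ Finset.range (m ^ n - 1),
        α ^ (r i).val * (starRingEnd ℂ α) ^ (r (i + h)).val = -1) := by
  classical
  obtain ⟨hirr, hord⟩ := hprim
  have hm : 2 ≤ m := (Fact.out : Nat.Prime m).two_le
  set T := m ^ n - 1 with hTdef
  have hT1 : 1 ≤ T := by
    have : 2 ≤ m ^ n := le_trans hm (Nat.le_self_pow hn.ne' m)
    omega
  set f := lfsrCharPoly m n a with hfdef
  have hmonic : f.Monic := charPoly_monic m n hn a
  have hdeg : f.natDegree = n := charPoly_natDegree m n hn a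
  haveI : Fact (Irreducible f) := ⟨hirr⟩
  set x : AdjoinRoot f := AdjoinRoot.root f with hxdef
  set pb := AdjoinRoot.powerBasis' hmonic with hpbdef
  have hpbdim : pb.dim = n := by rw [hpbdef, AdjoinRoot.powerBasis'_dim, hdeg]
  have hpbgen : pb.gen = x := by rw [hpbdef, AdjoinRoot.powerBasis'_gen]
  haveI : Module.Finite (ZMod m) (AdjoinRoot f) := Module.Finite.of_basis pb.basis
  have hfinrank : Module.finrank (ZMod m) (AdjoinRoot f) = n := by rw [pb.finrank, hpbdim]
  haveI : Finite (AdjoinRoot f) := Module.finite_of_finite (ZMod m)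
  haveI : Fintype (AdjoinRoot f) := Fintype.ofFinite _
  have hcardK : Fintype.card (AdjoinRoot f) = m ^ n := by
    rw [Module.card_eq_pow_finrank (K := ZMod m) (V := AdjoinRoot f), ZMod.card, hfinrank]
  -- the root relation
  have hxn : x ^ n = ∑ k : Fin n, AdjoinRoot.of f (a k) * x ^ (n - (k.1 + 1)) := by
    have h0 := AdjoinRoot.eval₂_root f
    rw [hfdef] at h0
    unfold lfsrCharPoly at h0
    simp only [eval₂_sub, eval₂_X_pow, eval₂_finset_sum, eval₂_mul, eval₂_C, eval₂_pow,
      eval₂_X, sub_eq_zero] at h0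
    exact h0
  -- the linear functional
  have hpos : 0 < pb.dim := by omega
  set L : AdjoinRoot f →ₗ[ZMod m] ZMod m := pb.basis.coord ⟨0, hpos⟩ with hLdef
  have hL1 : L (pb.basis ⟨0, hpos⟩) = 1 := by
    rw [hLdef, Module.Basis.coord_apply, Module.Basis.repr_self, Finsupp.single_eq_same]
  -- the state map
  set Φ : AdjoinRoot f →ₗ[ZMod m] (Fin n → ZMod m) :=
    LinearMap.pi (fun i => L ∘ₗ LinearMap.mulLeft (ZMod m) (x ^ (i : ℕ))) with hΦdef
  have hΦapp : ∀ β (i : Fin n), Φ β i = L (x ^ (i : ℕ) * β) := by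
    intro β i
    rw [hΦdef]
    simp only [LinearMap.pi_apply, LinearMap.comp_apply, LinearMap.mulLeft_apply]
  have hΦinj : Function.Injective Φ := by
    rw [injective_iff_map_eq_zero]
    intro β hβ
    by_contra hβ0
    have hLz : ∀ z, L z = 0 := by
      intro z
      have hz : z = z * β⁻¹ * β := by
        rw [mul_assoc, inv_mul_cancel₀ hβ0, mul_one]
      rw [hz]
      set y := z * β⁻¹ with hy
      have hrepr := pb.basis.sum_repr y
      rw [← hrepr]
      rw [Finset.sum_mul, map_sum]
      refine Finset.sum_eq_zero (fun i _ => ?_)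
      rw [smul_mul_assoc, map_smul]
      have : pb.basis i = x ^ (i : ℕ) := by rw [pb.coe_basis, hpbgen]
      rw [this]
      have h0 : L (x ^ (i : ℕ) * β) = 0 := by
        have h1 := congrFun hβ ⟨(i : ℕ), by omega⟩
        rw [hΦapp] at h1
        exact h1
      simp only [h0, smul_zero]
    rw [hLz] at hL1
    exact one_ne_zero hL1.symm
  have hΦsurj : Function.Surjective Φ := by
    have heq : Module.finrank (ZMod m) (AdjoinRoot f)
        = Module.finrank (ZMod m) (Fin n → ZMod m) := by
      rw [hfinrank, Module.finrank_pi]; simp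
    exact (LinearMap.injective_iff_surjective_of_finrank_eq_finrank heq).mp hΦinj
  obtain ⟨β, hβ⟩ := hΦsurj (fun j => r j.1)
  -- trace-like representation
  have hkey : ∀ i, r i = L (x ^ i * β) := by
    intro i
    induction i using Nat.strong_induction_on with
    | _ i ih =>
      rcases lt_or_ge i n with hi | hi
      · have := congrFun hβ ⟨i, hi⟩
        rw [hΦapp] at this
        exact this.symm
      · obtain ⟨j, rfl⟩ : ∃ j, i = j + n := ⟨i - n, (Nat.sub_add_cancel hi).symm⟩
        rw [hrec j]
        have hpow : x ^ (j + n) = ∑ k : Fin n, AdjoinRoot.of f (a k) * x ^ (j + n - (k.1 + 1)) := by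
          have hxx : x ^ (j + n) = x ^ n * x ^ j := by rw [← pow_add, Nat.add_comm]
          rw [hxx, hxn, Finset.sum_mul]
          refine Finset.sum_congr rfl (fun k _ => ?_)
          rw [mul_assoc, ← pow_add]
          congr 2
          omega
        have hx2 : x ^ (j + n) * β
            = ∑ k : Fin n, AdjoinRoot.of f (a k) * (x ^ (j + n - (k.1 + 1)) * β) := by
          rw [hpow, Finset.sum_mul]
          exact Finset.sum_congr rfl (fun k _ => by rw [mul_assoc])
        rw [hx2, map_sum]
        refine Finset.sum_congr rfl (fun k _ => ?_)
        have hsmul : AdjoinRoot.of f (a k) * (x ^ (j + n - (k.1 + 1)) * β)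
            = a k • (x ^ (j + n - (k.1 + 1)) * β) := by
          rw [Algebra.smul_def, AdjoinRoot.algebraMap_eq]
        rw [hsmul, map_smul, smul_eq_mul]
        rw [ih (j + n - (k.1 + 1)) (by omega)]
  have hβne : β ≠ 0 := by
    rintro rfl
    obtain ⟨j, hj, hrj⟩ := hnz
    exact hrj (by rw [hkey j]; simp)
  -- order facts
  have hxT : x ^ T = 1 := by rw [← hord]; exact pow_orderOf_eq_one x
  have hxne0 : x ≠ 0 := by
    intro hx0
    rw [hx0, zero_pow (by omega : T ≠ 0)] at hxT
    exact one_ne_zero hxT.symm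
  have hpowinj : ∀ i ∈ Finset.range T, ∀ j ∈ Finset.range T, x ^ i = x ^ j → i = j := by
    have key : ∀ i j, i < T → j < T → i ≤ j → x ^ i = x ^ j → i = j := by
      intro i j hiT hjT hij hxij
      by_contra hne
      have h1 : x ^ i * x ^ (j - i) = x ^ i * 1 := by
        rw [mul_one, ← pow_add, (by omega : i + (j - i) = j)]
        exact hxij.symm
      have h2 : x ^ (j - i) = 1 := mul_left_cancel₀ (pow_ne_zero _ hxne0) h1
      have := orderOf_le_of_pow_eq_one (by omega : 0 < j - i) h2
      omega
    intro i hi j hj hxij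
    simp only [Finset.mem_range] at hi hj
    rcases le_total i j with hij | hij
    · exact key i j hi hj hij hxij
    · exact (key j i hj hi hij hxij.symm).symm
  have himg : (Finset.range T).image (fun i => x ^ i) = Finset.univ.erase (0 : AdjoinRoot f) := by
    apply Finset.eq_of_subset_of_card_le
    · intro y hy
      simp only [Finset.mem_image, Finset.mem_range] at hy
      obtain ⟨i, _, rfl⟩ := hy
      exact Finset.mem_erase.mpr ⟨pow_ne_zero _ hxne0, Finset.mem_univ _⟩
    · rw [Finset.card_erase_of_mem (Finset.mem_univ _), Finset.card_univ, hcardK,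
        Finset.card_image_of_injOn hpowinj, Finset.card_range]
  -- character facts
  have hα0 : α ≠ 0 := by
    intro h0
    have := hα.pow_eq_one
    rw [h0, zero_pow (by omega : m ≠ 0)] at this
    exact one_ne_zero this.symm
  have hconj : (starRingEnd ℂ) α = α⁻¹ :=
    (Complex.inv_eq_conj (Complex.norm_eq_one_of_pow_eq_one hα.pow_eq_one (by omega))).symm
  have hmodpow : ∀ s : ℕ, α ^ s = α ^ (s % m) := by
    intro s
    conv_lhs => rw [← Nat.div_add_mod s m]
    rw [pow_add, pow_mul, hα.pow_eq_one, one_pow, one_mul]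
  have hadd : ∀ c d : ZMod m, α ^ (c + d).val = α ^ c.val * α ^ d.val := by
    intro c d
    rw [ZMod.val_add, ← hmodpow, pow_add]
  have hχne : ∀ c : ZMod m, α ^ c.val ≠ 0 := fun c => pow_ne_zero _ hα0
  have hsub : ∀ c d : ZMod m,
      α ^ c.val * ((starRingEnd ℂ) α) ^ d.val = α ^ (c - d).val := by
    intro c d
    rw [hconj, inv_pow, ← div_eq_mul_inv, div_eq_iff (hχne d), ← hadd, sub_add_cancel]
  -- total character sum is zero
  have hS : ∑ z : AdjoinRoot f, α ^ (L z).val = 0 := by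
    set S := ∑ z : AdjoinRoot f, α ^ (L z).val with hSdef
    set z0 := pb.basis ⟨0, hpos⟩ with hz0def
    have htrans : ∑ z : AdjoinRoot f, α ^ (L (z + z0)).val = S := by
      exact Fintype.sum_bijective (· + z0) (Equiv.addRight z0).bijective _ _ (fun z => rfl)
    have hstep : ∑ z : AdjoinRoot f, α ^ (L (z + z0)).val = α * S := by
      rw [hSdef, Finset.mul_sum]
      refine Finset.sum_congr rfl (fun z _ => ?_)
      rw [map_add, hL1, hadd, ZMod.val_one]
      ring
    have : α * S = S := by rw [← hstep, htrans]
    have hαne1 : α ≠ 1 := hα.ne_one (by omega)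
    have := sub_eq_zero.mpr this
    rw [← sub_one_mul] at this
    rcases mul_eq_zero.mp this with h1 | h2
    · exact absurd (by linear_combination h1 : α = 1) hαne1
    · exact h2
  constructor
  · -- periodic case
    intro hmod0
    obtain ⟨q, hq⟩ := Nat.dvd_of_mod_eq_zero hmod0
    have hperq : ∀ p i, r (i + T * p) = r i := by
      intro p
      induction p with
      | zero => intro i; simp
      | succ p ih =>
        intro i
        have : i + T * (p + 1) = i + T * p + T := by ring
        rw [this, hper, ih]
    have hrh : ∀ i, r (i + h) = r i := by intro i; rw [hq]; exact hperq q i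
    calc ∑ i ∈ Finset.range T, α ^ (r i).val * (starRingEnd ℂ α) ^ (r (i + h)).val
        = ∑ i ∈ Finset.range T, (1 : ℂ) := by
          refine Finset.sum_congr rfl (fun i _ => ?_)
          rw [hrh, hconj, inv_pow, mul_inv_cancel₀ (hχne _)]
      _ = ((T : ℕ) : ℂ) := by rw [Finset.sum_const, Finset.card_range, nsmul_eq_mul, mul_one]
  · -- aperiodic case
    intro hmod0
    have hxh : x ^ h ≠ 1 := by
      intro hx1
      have := orderOf_dvd_of_pow_eq_one hx1
      rw [hord] at this
      obtain ⟨c, rfl⟩ := this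
      exact hmod0 (Nat.mul_mod_right T c)
    set γ := (1 - x ^ h) * β with hγdef
    have hγ : γ ≠ 0 := mul_ne_zero (sub_ne_zero.mpr (Ne.symm hxh)) hβne
    have hterm : ∀ i : ℕ, α ^ (r i).val * (starRingEnd ℂ α) ^ (r (i + h)).val
        = α ^ (L (x ^ i * γ)).val := by
      intro i
      rw [hsub]
      congr 2
      rw [hkey i, hkey (i + h), ← map_sub]
      congr 1
      rw [hγdef, pow_add]
      ring
    calc ∑ i ∈ Finset.range T, α ^ (r i).val * (starRingEnd ℂ α) ^ (r (i + h)).val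
        = ∑ i ∈ Finset.range T, α ^ (L (x ^ i * γ)).val :=
          Finset.sum_congr rfl (fun i _ => hterm i)
      _ = ∑ y ∈ (Finset.range T).image (fun i => x ^ i), α ^ (L (y * γ)).val :=
          by rw [Finset.sum_image hpowinj]
      _ = ∑ y ∈ Finset.univ.erase (0 : AdjoinRoot f), α ^ (L (y * γ)).val := by rw [himg]
      _ = ∑ z ∈ Finset.univ.erase (0 : AdjoinRoot f), α ^ (L z).val := by
          refine Finset.sum_nbij' (fun y => y * γ) (fun z => z * γ⁻¹) ?_ ?_ ?_ ?_ ?_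
          · intro y hy
            exact Finset.mem_erase.mpr
              ⟨mul_ne_zero (Finset.mem_erase.mp hy).1 hγ, Finset.mem_univ _⟩
          · intro z hz
            exact Finset.mem_erase.mpr
              ⟨mul_ne_zero (Finset.mem_erase.mp hz).1 (inv_ne_zero hγ), Finset.mem_univ _⟩
          · intro y _
            rw [mul_assoc, mul_inv_cancel₀ hγ, mul_one]
          · intro z _
            rw [mul_assoc, inv_mul_cancel₀ hγ, mul_one]
          · intro y _
            rfl
      _ = (∑ z : AdjoinRoot f, α ^ (L z).val) - α ^ ((L 0).val) :=
          Finset.sum_erase_eq_sub (Finset.mem_univ 0)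
      _ = -1 := by rw [hS, map_zero, ZMod.val_zero, pow_zero]; ring
end

section
/- Let (r) be a pseudonoise sequence over F_m of order n (primitive characteristic polynomial, period m^n − 1), and let t_i = r_{pi+j} be the decimation with lag p > 0 and offset j. If gcd(m^n − 1, p) = 1 then (t) is again a pseudonoise sequence of order n (i.e., is generated by a primitive polynomial of degree n over F_m). -/
open Polynomial

/-- A pseudonoise sequence of order `n` over `F_m`: an LFSR sequence whose
characteristic polynomial is primitive of degree `n` and whose least period is
`m^n - 1`. -/
def IsPseudonoise (m n : ℕ) (r : ℕ → ZMod m) : Prop :=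
  ∃ a : Fin n → ZMod m,
    (∀ i, r (i + n) = ∑ k : Fin n, a k * r (i + n - (k.1 + 1))) ∧
    Irreducible (lfsrCharPoly m n a) ∧
    orderOf (AdjoinRoot.root (lfsrCharPoly m n a)) = m ^ n - 1 ∧
    IsLeast {T | 0 < T ∧ ∀ i, r (i + T) = r i} (m ^ n - 1)

section DecimationAux

variable {m : ℕ} [Fact (Nat.Prime m)]

lemma lfsr_coeff (n : ℕ) (a : Fin n → ZMod m) (d : ℕ) :
    (lfsrCharPoly m n a).coeff d =
      (if d = n then 1 else 0) - (if h : d < n then a ⟨n - 1 - d, by omega⟩ else 0) := by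
  unfold lfsrCharPoly
  rw [Polynomial.coeff_sub, Polynomial.coeff_X_pow, Polynomial.finset_sum_coeff]
  congr 1
  simp only [Polynomial.coeff_C_mul, Polynomial.coeff_X_pow]
  by_cases hd : d < n
  · rw [dif_pos hd]
    rw [Finset.sum_eq_single (⟨n - 1 - d, by omega⟩ : Fin n)]
    · simp [show n - (n - 1 - d + 1) = d by omega]
    · intro k _ hk
      have hk2 := k.2
      have hne : ¬ (d = n - (k.1 + 1)) := by
        intro h
        apply hk
        apply Fin.ext
        show k.1 = n - 1 - d
        omega
      simp [hne]
    · simp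
  · rw [dif_neg hd]
    apply Finset.sum_eq_zero
    intro k _
    have hk2 := k.2
    have hne : ¬ (d = n - (k.1 + 1)) := by omega
    simp [hne]

lemma lfsr_lower_degree_lt (n : ℕ) (hn : 0 < n) (a : Fin n → ZMod m) :
    (∑ k : Fin n, Polynomial.C (a k) * Polynomial.X ^ (n - (k.1 + 1))).degree < ((n : ℕ) : WithBot ℕ) := by
  apply lt_of_le_of_lt (Polynomial.degree_sum_le _ _)
  rw [Finset.sup_lt_iff (by exact_mod_cast WithBot.bot_lt_coe n)]
  intro k _
  apply lt_of_le_of_lt (Polynomial.degree_C_mul_X_pow_le _ _)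
  have hk2 := k.2
  exact_mod_cast (by omega : n - (k.1 + 1) < n)

lemma lfsr_monic (n : ℕ) (hn : 0 < n) (a : Fin n → ZMod m) :
    (lfsrCharPoly m n a).Monic :=
  Polynomial.monic_X_pow_sub (by exact_mod_cast lfsr_lower_degree_lt n hn a)

lemma lfsr_natDegree (n : ℕ) (hn : 0 < n) (a : Fin n → ZMod m) :
    (lfsrCharPoly m n a).natDegree = n := by
  have h : (lfsrCharPoly m n a).degree = n := by
    unfold lfsrCharPoly
    rw [Polynomial.degree_sub_eq_left_of_degree_lt]
    · exact Polynomial.degree_X_pow n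
    · rw [Polynomial.degree_X_pow]
      exact lfsr_lower_degree_lt n hn a
  exact Polynomial.natDegree_eq_of_degree_eq_some h

lemma lfsr_eq_of_monic {n : ℕ} (hn : 0 < n) {g : Polynomial (ZMod m)}
    (hg : g.Monic) (hdeg : g.natDegree = n) :
    lfsrCharPoly m n (fun k => -g.coeff (n - (k.1 + 1))) = g := by
  ext d
  rw [lfsr_coeff]
  by_cases hd : d < n
  · rw [dif_pos hd]
    have : n - (((⟨n - 1 - d, by omega⟩ : Fin n)).1 + 1) = d := by simp; omega
    rw [this]
    simp [if_neg (by omega : ¬ d = n)]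
  · rw [dif_neg hd]
    by_cases hdn : d = n
    · subst hdn
      simp [← hdeg, hg.coeff_natDegree]
    · rw [if_neg hdn, Polynomial.coeff_eq_zero_of_natDegree_lt (by omega)]
      simp

/-- `q` annihilates the sequence `s` as a linear recurrence. -/
def decAnn (m : ℕ) (s : ℕ → ZMod m) (q : Polynomial (ZMod m)) : Prop :=
  ∀ i, q.sum (fun k c => c * s (i + k)) = 0

lemma decAnn_range {s : ℕ → ZMod m} {q : Polynomial (ZMod m)} (hq : decAnn m s q)
    (N : ℕ) (hN : q.natDegree < N) (i : ℕ) :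
    ∑ d ∈ Finset.range N, q.coeff d * s (i + d) = 0 := by
  have h2 := Polynomial.sum_over_range' q (f := fun k c => c * s (i + k)) (by simp) N hN
  exact h2.symm.trans (hq i)

lemma decAnn_add {s : ℕ → ZMod m} {q₁ q₂ : Polynomial (ZMod m)}
    (h₁ : decAnn m s q₁) (h₂ : decAnn m s q₂) : decAnn m s (q₁ + q₂) := by
  intro i
  rw [Polynomial.sum_add_index q₁ q₂ (fun k c => c * s (i + k)) (fun k => zero_mul _)
    (fun k b c => add_mul b c _), h₁ i, h₂ i, add_zero]

lemma decAnn_mul_C {s : ℕ → ZMod m} {q : Polynomial (ZMod m)}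
    (h : decAnn m s q) (c : ZMod m) : decAnn m s (q * Polynomial.C c) := by
  intro i
  rw [Polynomial.sum_over_range' _ (by simp) (q.natDegree + 1)
    (lt_of_le_of_lt (Polynomial.natDegree_mul_le.trans (by simp)) (Nat.lt_succ_self _))]
  simp only [Polynomial.coeff_mul_C]
  have hr := decAnn_range h (q.natDegree + 1) (Nat.lt_succ_self _) i
  calc ∑ d ∈ Finset.range (q.natDegree + 1), q.coeff d * c * s (i + d)
      = (∑ d ∈ Finset.range (q.natDegree + 1), q.coeff d * s (i + d)) * c := by
        rw [Finset.sum_mul]; exact Finset.sum_congr rfl fun d _ => by ring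
    _ = 0 := by rw [hr, zero_mul]

lemma decAnn_mul_X {s : ℕ → ZMod m} {q : Polynomial (ZMod m)}
    (h : decAnn m s q) : decAnn m s (q * Polynomial.X) := by
  intro i
  rw [Polynomial.sum_over_range' _ (by simp) (q.natDegree + 2)
    (lt_of_le_of_lt (Polynomial.natDegree_mul_le.trans (by simp)) (Nat.lt_succ_self _))]
  rw [Finset.sum_range_succ']
  simp only [Polynomial.coeff_mul_X, Polynomial.mul_coeff_zero, Polynomial.coeff_X_zero,
    mul_zero, zero_mul, add_zero]
  have hr := decAnn_range h (q.natDegree + 1) (Nat.lt_succ_self _) (i + 1)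
  rw [← hr]
  exact Finset.sum_congr rfl fun d _ => by rw [show i + (d + 1) = i + 1 + d by omega]

lemma decAnn_mul_X_pow {s : ℕ → ZMod m} {q : Polynomial (ZMod m)}
    (h : decAnn m s q) (e : ℕ) : decAnn m s (q * Polynomial.X ^ e) := by
  induction e with
  | zero => simpa using h
  | succ e ih =>
      rw [pow_succ, ← mul_assoc]
      exact decAnn_mul_X ih

lemma decAnn_mul {s : ℕ → ZMod m} {f : Polynomial (ZMod m)}
    (hf : decAnn m s f) (q : Polynomial (ZMod m)) : decAnn m s (f * q) := by
  induction q using Polynomial.induction_on' with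
  | add p q hp hq => rw [mul_add]; exact decAnn_add hp hq
  | monomial e c =>
      rw [← Polynomial.C_mul_X_pow_eq_monomial, ← mul_assoc]
      exact decAnn_mul_X_pow (decAnn_mul_C hf c) e

lemma decAnn_of_dvd {s : ℕ → ZMod m} {f P : Polynomial (ZMod m)}
    (hf : decAnn m s f) (hdvd : f ∣ P) : decAnn m s P := by
  obtain ⟨q, rfl⟩ := hdvd
  exact decAnn_mul hf q

lemma decAnn_iff_rec (n : ℕ) (hn : 0 < n) (a : Fin n → ZMod m) (s : ℕ → ZMod m) :
    decAnn m s (lfsrCharPoly m n a) ↔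
      ∀ i, s (i + n) = ∑ k : Fin n, a k * s (i + n - (k.1 + 1)) := by
  have key : ∀ i, (lfsrCharPoly m n a).sum (fun k c => c * s (i + k)) =
      s (i + n) - ∑ k : Fin n, a k * s (i + n - (k.1 + 1)) := by
    intro i
    rw [Polynomial.sum_over_range' _ (by simp) (n + 1)
      (by rw [lfsr_natDegree n hn a]; omega)]
    simp only [lfsr_coeff, sub_mul]
    rw [Finset.sum_sub_distrib]
    congr 1
    · rw [Finset.sum_eq_single n]
      · simp
      · intro d _ hd; simp [hd]
      · intro hmem; exact absurd (Finset.self_mem_range_succ n) hmem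
    · rw [Finset.sum_range_succ, dif_neg (lt_irrefl n), zero_mul, add_zero]
      have step : ∀ d ∈ Finset.range n,
          (if h : d < n then a ⟨n - 1 - d, by omega⟩ else 0) * s (i + d)
            = a ⟨n - 1 - d % n, by omega⟩ * s (i + d) := by
        intro d hd
        have hdn := Finset.mem_range.mp hd
        rw [dif_pos hdn]
        have h1 : (⟨n - 1 - d % n, by omega⟩ : Fin n) = ⟨n - 1 - d, by omega⟩ :=
          Fin.mk_eq_mk.mpr (by rw [Nat.mod_eq_of_lt hdn])
        rw [h1]
      rw [Finset.sum_congr rfl step]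
      rw [← Fin.sum_univ_eq_sum_range (fun d => a ⟨n - 1 - d % n, by omega⟩ * s (i + d)) n]
      have hinv : Function.Involutive
          (fun k : Fin n => (⟨n - 1 - k.1, by omega⟩ : Fin n)) := by
        intro k
        have hk2 := k.2
        apply Fin.ext
        show n - 1 - (n - 1 - k.1) = k.1
        omega
      refine Fintype.sum_equiv hinv.toPerm _ _ ?_
      intro k
      have hk2 := k.2
      show a ⟨n - 1 - k.1 % n, by omega⟩ * s (i + k.1)
          = a ⟨n - 1 - k.1, by omega⟩ * s (i + n - ((n : ℕ) - 1 - k.1 + 1))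
      have h1 : (⟨n - 1 - k.1 % n, by omega⟩ : Fin n) = ⟨n - 1 - k.1, by omega⟩ :=
        Fin.mk_eq_mk.mpr (by rw [Nat.mod_eq_of_lt hk2])
      rw [h1]
      have h2 : i + n - ((n : ℕ) - 1 - k.1 + 1) = i + k.1 := by omega
      rw [h2]
  constructor
  · intro h i
    have := h i
    rw [key i, sub_eq_zero] at this
    exact this
  · intro h i
    rw [key i, h i, sub_self]

lemma decAnn_sum_finset {s : ℕ → ZMod m} {ι : Type*} (F : Finset ι)
    (φ : ι → Polynomial (ZMod m)) (i : ℕ) :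
    (∑ x ∈ F, φ x).sum (fun k c => c * s (i + k)) =
      ∑ x ∈ F, (φ x).sum (fun k c => c * s (i + k)) := by
  induction F using Finset.cons_induction with
  | empty => simp [Polynomial.sum_zero_index]
  | cons x F hx ih =>
      rw [Finset.sum_cons, Finset.sum_cons,
        Polynomial.sum_add_index _ _ (fun k c => c * s (i + k)) (fun k => zero_mul _)
          (fun k b c => add_mul b c _), ih]

end DecimationAux

/-- If `gcd(m^n - 1, p) = 1`, the decimation `t i = r (p*i + j)` of a pseudonoise
sequence of order `n` over `F_m` is again a pseudonoise sequence of order `n`. -/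
theorem decimation_of_pseudonoise (m n p j : ℕ) [Fact (Nat.Prime m)] (hn : 0 < n)
    (hp : 0 < p) (r : ℕ → ZMod m) (hr : IsPseudonoise m n r)
    (hgcd : Nat.gcd (m ^ n - 1) p = 1) :
    IsPseudonoise m n (fun i => r (p * i + j)) := by
  obtain ⟨a, hrec, hirr, hord, hper⟩ := hr
  set T := m ^ n - 1 with hT
  have hTpos : 0 < T := hper.1.1
  set f := lfsrCharPoly m n a with hfdef
  have hfmonic : f.Monic := lfsr_monic n hn a
  have hfdeg : f.natDegree = n := lfsr_natDegree n hn a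
  haveI : Fact (Irreducible f) := ⟨hirr⟩
  set K := AdjoinRoot f with hK
  set α : K := AdjoinRoot.root f with hα
  have hfne : f ≠ 0 := hfmonic.ne_zero
  haveI : Module.Finite (ZMod m) K := (AdjoinRoot.powerBasis hfne).finite
  haveI : Finite K := Module.finite_of_finite (ZMod m)
  haveI : Fintype K := Fintype.ofFinite K
  have hrank : Module.finrank (ZMod m) K = n := by
    rw [(AdjoinRoot.powerBasis hfne).finrank, AdjoinRoot.powerBasis_dim, hfdeg]
  have hcard : Fintype.card K = m ^ n := by
    rw [Module.card_eq_pow_finrank (K := ZMod m) (V := K), ZMod.card, hrank]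
  have hmin : minpoly (ZMod m) α = f :=
    (minpoly.eq_of_irreducible_of_monic hirr
      (by rw [AdjoinRoot.aeval_eq, AdjoinRoot.mk_self]) hfmonic).symm
  set β : K := α ^ p with hβ
  have hβord : orderOf β = T := by
    rw [hβ, orderOf_pow' α hp.ne', hord, hgcd, Nat.div_one]
  -- β generates everything
  have hβunit : IsUnit β := by
    apply IsUnit.of_mul_eq_one (a := β) (β ^ (T - 1))
    rw [← pow_succ']
    rw [show T - 1 + 1 = T by omega, ← hβord]
    exact pow_orderOf_eq_one β
  have hβint : IsIntegral (ZMod m) β := IsIntegral.of_finite _ _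
  set g := minpoly (ZMod m) β with hgdef
  have hgmonic : g.Monic := minpoly.monic hβint
  have hgirr : Irreducible g := minpoly.irreducible hβint
  have hadj : IntermediateField.adjoin (ZMod m) {β} = ⊤ := by
    rw [eq_top_iff]
    intro x _
    by_cases hx : x = 0
    · subst hx; exact zero_mem _
    · set v : Kˣ := hβunit.unit with hv
      have hvord : orderOf v = T := by rw [← orderOf_units, IsUnit.unit_spec, hβord]
      have htop : Subgroup.zpowers v = ⊤ := by
        apply Subgroup.eq_top_of_card_eq
        rw [Nat.card_zpowers, hvord, Nat.card_eq_fintype_card (α := Kˣ)]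
        classical
        rw [Fintype.card_units (α := K), hcard]
      obtain ⟨k, hk⟩ := (htop ▸ Subgroup.mem_top (IsUnit.unit (IsUnit.of_mul_eq_one (a := x) x⁻¹
        (mul_inv_cancel₀ hx))) : _ ∈ Subgroup.zpowers v)
      have hxval : x = β ^ k := by
        have := congrArg (Units.val) hk
        rw [Units.val_zpow_eq_zpow_val, IsUnit.unit_spec, IsUnit.unit_spec] at this
        exact this.symm
      rw [hxval]
      exact zpow_mem (IntermediateField.mem_adjoin_simple_self _ β) k
  have hgdeg : g.natDegree = n := by
    have h2 := IntermediateField.adjoin.finrank hβint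
    rw [hadj, IntermediateField.finrank_top', hrank] at h2
    exact h2.symm
  -- the combined polynomial
  set P : Polynomial (ZMod m) :=
    ∑ d ∈ Finset.range (n + 1), Polynomial.C (g.coeff d) * Polynomial.X ^ (p * d) with hPdef
  have haevalP : Polynomial.aeval α P = 0 := by
    have hg0 : Polynomial.aeval β g = 0 := minpoly.aeval _ _
    rw [Polynomial.aeval_eq_sum_range' (n := n + 1) (by omega) β] at hg0
    rw [hPdef, map_sum]
    rw [← hg0]
    refine Finset.sum_congr rfl fun d _ => ?_
    rw [map_mul, map_pow, Polynomial.aeval_C, Polynomial.aeval_X, pow_mul, ← hβ,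
      Algebra.smul_def]
  have hdvdP : f ∣ P := by
    rw [← hmin]
    exact minpoly.dvd _ _ haevalP
  have hAnnf : decAnn m r f := (decAnn_iff_rec n hn a r).mpr hrec
  have hAnnP : decAnn m r P := decAnn_of_dvd hAnnf hdvdP
  have hcomb : ∀ i, ∑ d ∈ Finset.range (n + 1), g.coeff d * r (i + p * d) = 0 := by
    intro i
    have := hAnnP i
    rw [hPdef, decAnn_sum_finset] at this
    rw [← this]
    refine Finset.sum_congr rfl fun d _ => ?_
    rw [Polynomial.C_mul_X_pow_eq_monomial]
    exact (Polynomial.sum_monomial_index (n := p * d) (g.coeff d)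
      (fun k c => c * r (i + k)) (zero_mul _)).symm
  set a' : Fin n → ZMod m := fun k => -g.coeff (n - (k.1 + 1)) with ha'
  have hchar : lfsrCharPoly m n a' = g := lfsr_eq_of_monic hn hgmonic hgdeg
  have hAnng : decAnn m (fun i => r (p * i + j)) g := by
    intro i
    rw [Polynomial.sum_over_range' _ (by simp) (n + 1) (by rw [hgdeg]; omega)]
    have := hcomb (p * i + j)
    rw [← this]
    refine Finset.sum_congr rfl fun d _ => ?_
    simp only []
    congr 2
    ring
  -- period helpers
  have hperiod : ∀ x, r (x + T) = r x := hper.1.2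
  have hperC : ∀ c x, r (x + c * T) = r x := by
    intro c
    induction c with
    | zero => simp
    | succ c ih =>
        intro x
        rw [show x + (c + 1) * T = x + c * T + T by ring, hperiod, ih]
  have hdvd_period : ∀ S, 0 < S → (∀ x, r (x + S) = r x) → T ∣ S := by
    intro S hS hSp
    have hmod : ∀ x, r (x + S % T) = r x := by
      intro x
      calc r (x + S % T) = r (x + S % T + S / T * T) := (hperC _ _).symm
        _ = r (x + S) := by rw [add_assoc, Nat.mod_add_div']
        _ = r x := hSp x
    by_contra hnd
    have hne : S % T ≠ 0 := fun h => hnd (Nat.dvd_of_mod_eq_zero h)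
    have hle := hper.2 ⟨Nat.pos_of_ne_zero hne, hmod⟩
    exact absurd hle (not_le.mpr (Nat.mod_lt S hTpos))
  refine ⟨a', (decAnn_iff_rec n hn a' _).mp (hchar ▸ hAnng), hchar ▸ hgirr, ?_, ?_, ?_⟩
  · -- order of root of g
    rw [hchar]
    haveI : Fact (Irreducible g) := ⟨hgirr⟩
    have hev : Polynomial.eval₂ (algebraMap (ZMod m) K) β g = 0 := by
      rw [← Polynomial.aeval_def]; exact minpoly.aeval _ _
    set ψ := AdjoinRoot.lift (algebraMap (ZMod m) K) β hev with hψ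
    have hinj : Function.Injective ψ := ψ.injective
    have horder := orderOf_injective ψ.toMonoidHom hinj (AdjoinRoot.root g)
    rw [show ψ.toMonoidHom (AdjoinRoot.root g) = β from AdjoinRoot.lift_root hev] at horder
    rw [← horder, hβord]
  · -- T is a period of t
    refine ⟨hTpos, fun i => ?_⟩
    show r (p * (i + T) + j) = r (p * i + j)
    rw [show p * (i + T) + j = p * i + j + p * T by ring, hperC]
  · -- lower bound
    rintro T' ⟨hT'pos, hT'⟩
    haveI : NeZero T := ⟨hTpos.ne'⟩
    have hpu : IsUnit (p : ZMod T) :=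
      (ZMod.isUnit_iff_coprime p T).mpr (Nat.coprime_comm.mp hgcd)
    have hrT' : ∀ x, r (x + p * T') = r x := by
      intro x
      set z : ZMod T := (p : ZMod T)⁻¹ * ((x : ZMod T) - (j : ZMod T)) with hz
      set i : ℕ := z.val + x * T with hi
      have hge : x ≤ p * i + j := by
        have h1 : x ≤ x * T := by nlinarith
        have h2 : x * T ≤ i := by rw [hi]; omega
        have h3 : i ≤ p * i := by nlinarith
        omega
      have hcong : ((p * i + j : ℕ) : ZMod T) = ((x : ℕ) : ZMod T) := by
        push_cast
        rw [hi]
        push_cast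
        rw [ZMod.natCast_self, mul_zero, add_zero, ZMod.natCast_val, ZMod.cast_id]
        rw [hz, ← mul_assoc, ZMod.mul_inv_of_unit _ hpu, one_mul]
        ring
      have hmodeq : (p * i + j) ≡ x [MOD T] := (ZMod.natCast_eq_natCast_iff _ _ _).mp hcong
      obtain ⟨c, hc⟩ := (Nat.modEq_iff_dvd' hge).mp hmodeq.symm
      rw [Nat.mul_comm T c] at hc
      have hc' : p * i + j = x + c * T := by omega
      calc r (x + p * T') = r (x + p * T' + c * T) := (hperC _ _).symm
        _ = r (p * (i + T') + j) := by
            congr 1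
            have : p * (i + T') + j = p * i + j + p * T' := by ring
            omega
        _ = r (p * i + j) := hT' i
        _ = r (x + c * T) := by rw [hc']
        _ = r x := hperC _ _
    have hdvd : T ∣ p * T' := hdvd_period _ (Nat.mul_pos hp hT'pos) hrT'
    have hdvd' : T ∣ T' := by
      have hco : Nat.Coprime T p := hgcd
      exact hco.dvd_of_dvd_mul_left hdvd
    exact Nat.le_of_dvd hT'pos hdvd'
end

section
/- Let m = 2^e − k with k ≥ 1, k(k+2) ≤ m, and let s be an integer with 0 ≤ s ≤ (m−k)^2. Define s' = (s mod 2^e) + k·⌊s/2^e⌋ and x = (s' mod 2^e) + k·⌊s'/2^e⌋. Then s ≡ s' ≡ x (mod m) and x < m + k(k+2) ≤ 2m, so s mod m equals x or x − m. -/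
set_option maxHeartbeats 1000000 in
/-- Generalized fast modular reduction for `m = 2^e - k` with `k(k+2) ≤ m`:
with `s' = (s mod 2^e) + k⌊s/2^e⌋` and `x = (s' mod 2^e) + k⌊s'/2^e⌋` one has
`s ≡ s' ≡ x (mod m)` and `x < m + k(k+2) ≤ 2m`, so `s mod m` equals `x` or `x - m`. -/
theorem sophie_germain_fast_reduction (e k s : ℕ) (he : 0 < e) (hk : 1 ≤ k)
    (hkm : k * (k + 2) ≤ 2 ^ e - k) (hs : s ≤ (2 ^ e - k - k) ^ 2) :
    let m := 2 ^ e - k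
    let s' := s % 2 ^ e + k * (s / 2 ^ e)
    let x := s' % 2 ^ e + k * (s' / 2 ^ e)
    s % m = s' % m ∧ s' % m = x % m ∧
      x < m + k * (k + 2) ∧ m + k * (k + 2) ≤ 2 * m ∧
      (s % m = x ∨ s % m = x - m) := by
  intro m s' x
  have hmdef : m = 2 ^ e - k := rfl
  have hs'0 : s' = s % 2 ^ e + k * (s / 2 ^ e) := rfl
  have hx0 : x = s' % 2 ^ e + k * (s' / 2 ^ e) := rfl
  clear_value m s' x
  have hp0 : 0 < 2 ^ e := Nat.pow_pos (by norm_num)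
  have hkp : k < 2 ^ e := by
    rcases Nat.lt_or_ge k (2 ^ e) with h | h
    · exact h
    · exfalso
      have h0 : 2 ^ e - k = 0 := by omega
      rw [h0] at hkm
      nlinarith
  have hbig : k * (k + 2) + k ≤ 2 ^ e := (Nat.le_sub_iff_add_le hkp.le).mp hkm
  have hbig' : k * k + 3 * k ≤ 2 ^ e := by nlinarith
  obtain ⟨c0, hc⟩ := Nat.exists_eq_add_of_le hbig'
  -- m in closed form
  have hmk : m + k = 2 ^ e := by rw [hmdef]; exact Nat.sub_add_cancel hkp.le
  have hmval : m = k * k + 2 * k + c0 := by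
    have := hmk; rw [hc] at this
    generalize k * k = K at this ⊢; omega
  have hs' : s ≤ (k * k + k + c0) ^ 2 := by
    have h2 : 2 ^ e - k - k = k * k + k + c0 := by
      rw [hc]; generalize k * k = K; omega
    rwa [h2] at hs
  set q := s / 2 ^ e with hqdef
  set r := s % 2 ^ e with hrdef
  have hdiv : r + 2 ^ e * q = s := Nat.mod_add_div s (2 ^ e)
  have hrlt : r < 2 ^ e := Nat.mod_lt s hp0
  have hq1 : 2 ^ e * q ≤ s := le_trans (Nat.le_add_left _ _) hdiv.le
  have hqle : q ≤ k * k + c0 := by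
    by_contra h
    push_neg at h
    rw [hc] at hq1
    nlinarith [hs', hq1, h]
  have hs'def : s' = r + k * q := hs'0
  set q' := s' / 2 ^ e with hq'def
  set r' := s' % 2 ^ e with hr'def
  have hdiv' : r' + 2 ^ e * q' = s' := Nat.mod_add_div s' (2 ^ e)
  have hr'lt : r' < 2 ^ e := Nat.mod_lt s' hp0
  have hq'le : q' ≤ k := by
    have hr2 : r < k * k + 3 * k + c0 := by rw [← hc]; exact hrlt
    have h8 : k * q ≤ k * (k * k + c0) := Nat.mul_le_mul_left k hqle
    have hlt : s' < (k + 1) * 2 ^ e := by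
      rw [hs'def, hc]
      nlinarith [hr2, h8, sq_nonneg k]
    have := (Nat.div_lt_iff_lt_mul hp0).mpr hlt
    omega
  have hxdef : x = r' + k * q' := hx0
  -- congruences
  have hse : s = s' + m * q := by
    calc s = r + 2 ^ e * q := hdiv.symm
      _ = r + (m + k) * q := by rw [hmk]
      _ = (r + k * q) + m * q := by ring
      _ = s' + m * q := by rw [hs'def]
  have hA : s % m = s' % m := by rw [hse, Nat.add_mul_mod_self_left]
  have hs'e : s' = x + m * q' := by
    calc s' = r' + 2 ^ e * q' := hdiv'.symm
      _ = r' + (m + k) * q' := by rw [hmk]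
      _ = (r' + k * q') + m * q' := by ring
      _ = x + m * q' := by rw [hxdef]
  have hB : s' % m = x % m := by rw [hs'e, Nat.add_mul_mod_self_left]
  -- bounds
  have hC : x < m + k * (k + 2) := by
    rw [hxdef, hmval]
    have h6 : r' < k * k + 3 * k + c0 := by rw [← hc]; exact hr'lt
    have h7 : k * q' ≤ k * k := Nat.mul_le_mul_left k hq'le
    nlinarith [h6, h7]
  have hD : m + k * (k + 2) ≤ 2 * m := by
    have h5 : k * (k + 2) ≤ m := hmdef ▸ hkm
    linarith
  refine ⟨hA, hB, hC, hD, ?_⟩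
  have hxm : s % m = x % m := hA.trans hB
  rcases Nat.lt_or_ge x m with h | h
  · left; rw [hxm, Nat.mod_eq_of_lt h]
  · right
    rw [hxm, Nat.mod_eq_sub_mod h, Nat.mod_eq_of_lt (by omega)]
end
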